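/- Let $k$ be a field and $V$ a 2-dimensional $k$-vector space with basis $x_0,x_1$. For $n\ge 2$, define the map $Q: S^{n-2}V \to S^2(S^nV)$ by $Q(f) = (x_0^2 f)\cdot(x_1^2 f) - (x_0x_1 f)^2$ (products taken in the symmetric algebra of $S^nV$). Then the associated polarized linear map $S_2(S^{n-2}V)\to S^2(S^nV)$ is injective. -/
import Mathlib


open MvPolynomial TensorProduct

noncomputable section

variable (k : Type*) [Field k]

abbrev BinS := MvPolynomial (Fin 2) k

/-- degree-`d` binary forms `SᵈV`. -/
abbrev binForms (d : ℕ) : Submodule k (BinS k) :=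
  MvPolynomial.homogeneousSubmodule (Fin 2) k d

/-- the symmetric square `S²(S)` of the space of binary forms, as the quotient of
`S ⊗ S` by the span of `a ⊗ b - b ⊗ a`. -/
abbrev SymSq := (BinS k ⊗[k] BinS k) ⧸
  Submodule.span k {z : BinS k ⊗[k] BinS k | ∃ a b : BinS k, z = a ⊗ₜ b - b ⊗ₜ a}

/-- The polarization of the quadratic map `Q(f) = (x₀²f)(x₁²f) - (x₀x₁f)²`, as a linear
map `S ⊗ S → S²(S)`: `f ⊗ g ↦ class of (x₀²f) ⊗ (x₁²g) - (x₀x₁f) ⊗ (x₀x₁g)`. -/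
def polQ : BinS k ⊗[k] BinS k →ₗ[k] SymSq k :=
  (Submodule.mkQ _).comp
    (TensorProduct.map (LinearMap.mulLeft k ((X 0 : BinS k) * X 0))
        (LinearMap.mulLeft k ((X 1 : BinS k) * X 1)) -
      TensorProduct.map (LinearMap.mulLeft k ((X 0 : BinS k) * X 1))
        (LinearMap.mulLeft k ((X 0 : BinS k) * X 1)))

/-- the flip on `S ⊗ S`. -/
def flipMap : BinS k ⊗[k] BinS k →ₗ[k] BinS k ⊗[k] BinS k :=
  (TensorProduct.comm k _ _).toLinearMap

/-- symmetric tensors `S₂(S^{n-2}V) ⊆ S^{n-2}V ⊗ S^{n-2}V`. -/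
def symTensors (m : ℕ) : Submodule k (BinS k ⊗[k] BinS k) :=
  (Submodule.map₂ (TensorProduct.mk k _ _) (binForms k m) (binForms k m)) ⊓
    LinearMap.ker (flipMap k - LinearMap.id)

/-- `map (mulLeft a) (mulLeft b)` is multiplication by `a ⊗ₜ b` in the tensor algebra. -/
lemma mapMulLeft (a b : BinS k) :
    TensorProduct.map (LinearMap.mulLeft k a) (LinearMap.mulLeft k b)
      = LinearMap.mulLeft k (a ⊗ₜ[k] b) := by
  apply TensorProduct.ext'
  intro f g
  simp [Algebra.TensorProduct.tmul_mul_tmul]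

/-- flip intertwines the tensor-multiplication maps. -/
lemma flip_map_comm (a b : BinS k) (z : BinS k ⊗[k] BinS k) :
    flipMap k (TensorProduct.map (LinearMap.mulLeft k a) (LinearMap.mulLeft k b) z)
      = TensorProduct.map (LinearMap.mulLeft k b) (LinearMap.mulLeft k a) (flipMap k z) := by
  have h : (flipMap k).comp (TensorProduct.map (LinearMap.mulLeft k a) (LinearMap.mulLeft k b))
      = (TensorProduct.map (LinearMap.mulLeft k b) (LinearMap.mulLeft k a)).comp (flipMap k) := by
    apply TensorProduct.ext'
    intro f g
    simp [flipMap]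
  exact DFunLike.congr_fun h z

/-- for `n ≥ 2`, the polarized linear map
`S₂(S^{n-2}V) → S²(SⁿV)` associated with the quadratic map
`Q(f) = (x₀²f)(x₁²f) - (x₀x₁f)²` is injective. -/
theorem polarized_Q_injective (n : ℕ) (hn : 2 ≤ n) :
    ∀ t ∈ symTensors k (n - 2), polQ k t = 0 → t = 0 := by
  intro t ht hQ
  have hflip : flipMap k t = t := by
    have h2 : t ∈ LinearMap.ker (flipMap k - LinearMap.id) := ht.2
    rwa [LinearMap.mem_ker, LinearMap.sub_apply, LinearMap.id_apply, sub_eq_zero] at h2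
  set U := TensorProduct.map (LinearMap.mulLeft k ((X 0 : BinS k) * X 0))
      (LinearMap.mulLeft k ((X 1 : BinS k) * X 1)) with hU
  set U' := TensorProduct.map (LinearMap.mulLeft k ((X 1 : BinS k) * X 1))
      (LinearMap.mulLeft k ((X 0 : BinS k) * X 0)) with hU'
  set V := TensorProduct.map (LinearMap.mulLeft k ((X 0 : BinS k) * X 1))
      (LinearMap.mulLeft k ((X 0 : BinS k) * X 1)) with hV
  -- `polQ t = 0` means `(U - V) t` lies in the span of antisymmetric tensors
  have hz : (U - V) t ∈
      Submodule.span k {z : BinS k ⊗[k] BinS k | ∃ a b : BinS k, z = a ⊗ₜ b - b ⊗ₜ a} := by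
    rw [polQ, LinearMap.comp_apply, Submodule.mkQ_apply, Submodule.Quotient.mk_eq_zero] at hQ
    exact hQ
  -- the symmetrization `id + flip` kills that span
  have hspan : Submodule.span k {z : BinS k ⊗[k] BinS k | ∃ a b : BinS k, z = a ⊗ₜ b - b ⊗ₜ a}
      ≤ LinearMap.ker (LinearMap.id + flipMap k) := by
    rw [Submodule.span_le]
    rintro z ⟨a, b, rfl⟩
    simp only [SetLike.mem_coe, LinearMap.mem_ker, LinearMap.add_apply, LinearMap.id_apply,
      map_sub, flipMap, LinearEquiv.coe_coe, TensorProduct.comm_tmul]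
    abel
  have hsum : (U - V) t + flipMap k ((U - V) t) = 0 := by
    have h := hspan hz
    rw [LinearMap.mem_ker, LinearMap.add_apply, LinearMap.id_apply] at h
    exact h
  -- compute the symmetrization using `flip t = t`
  have hflipU : flipMap k (U t) = U' t := by
    rw [hU, hU', flip_map_comm, hflip]
  have hflipV : flipMap k (V t) = V t := by
    rw [hV, flip_map_comm, hflip]
  have hMt : U t + U' t - V t - V t = 0 := by
    rw [LinearMap.sub_apply, map_sub, hflipU, hflipV] at hsum
    linear_combination (norm := abel) hsum
  -- rewrite as multiplication by a fixed nonzero element `M` of the tensor algebra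
  set M : BinS k ⊗[k] BinS k :=
    ((X 0 : BinS k) * X 0) ⊗ₜ[k] ((X 1 : BinS k) * X 1)
      + ((X 1 : BinS k) * X 1) ⊗ₜ[k] ((X 0 : BinS k) * X 0)
      - ((X 0 : BinS k) * X 1) ⊗ₜ[k] ((X 0 : BinS k) * X 1)
      - ((X 0 : BinS k) * X 1) ⊗ₜ[k] ((X 0 : BinS k) * X 1) with hM
  have hmul : M * t = 0 := by
    have e1 : U t = (((X 0 : BinS k) * X 0) ⊗ₜ[k] ((X 1 : BinS k) * X 1)) * t := by
      rw [hU, mapMulLeft]; rfl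
    have e2 : U' t = (((X 1 : BinS k) * X 1) ⊗ₜ[k] ((X 0 : BinS k) * X 0)) * t := by
      rw [hU', mapMulLeft]; rfl
    have e3 : V t = (((X 0 : BinS k) * X 1) ⊗ₜ[k] ((X 0 : BinS k) * X 1)) * t := by
      rw [hV, mapMulLeft]; rfl
    rw [hM, sub_mul, sub_mul, add_mul, ← e1, ← e2, ← e3]
    exact hMt
  -- `M ≠ 0`: evaluate at the point `((1,0),(0,1))`
  have hMne : M ≠ 0 := by
    have hΦ : (Algebra.TensorProduct.productMap
        (aeval (![1, 0] : Fin 2 → k)) (aeval (![0, 1] : Fin 2 → k))) M = 1 := by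
      simp [hM, Algebra.TensorProduct.productMap_apply_tmul]
    intro h0
    rw [h0, map_zero] at hΦ
    exact one_ne_zero hΦ.symm
  -- transport to the polynomial ring `MvPolynomial (Fin 2) (BinS k)`, which is a domain
  set e := MvPolynomial.algebraTensorAlgEquiv k (BinS k) with he
  have h0 : e M * e t = 0 := by
    rw [← map_mul, hmul, map_zero]
  rcases mul_eq_zero.mp h0 with h | h
  · exact absurd (e.injective (by rw [h, map_zero])) hMne
  · exact e.injective (by rw [h, map_zero])

end
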